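/- Let A be a commutative ring and I ⊆ A an ideal such that for every a ∈ I there exists b ∈ I with a*b = a. Then there exists a multiplicative subset S of A such that the quotient map A → A/I induces an isomorphism S⁻¹A ≅ A/I compatible with the canonical maps A → A/I and A → S⁻¹A. -/

import Mathlib

/-- If every element `a` of an ideal `I` admits `b ∈ I` with `a * b = a`, then there is a
multiplicative subset `S` of `A` such that `A/I ≅ S⁻¹A`, compatibly with the canonical maps
`A → S⁻¹A` and `A → A/I`. -/
theorem stmt_0 {A : Type} [CommRing A] (I : Ideal A)
    (h : ∀ a ∈ I, ∃ b ∈ I, a * b = a) :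
    ∃ (S : Submonoid A) (e : Localization S ≃+* A ⧸ I),
      (e : Localization S →+* A ⧸ I).comp (algebraMap A (Localization S)) =
        Ideal.Quotient.mk I := by
  set S : Submonoid A :=
    { carrier := {s | s - 1 ∈ I}
      one_mem' := by simp
      mul_mem' := by
        intro s t hs ht
        have : s * t - 1 = s * (t - 1) + (s - 1) := by ring
        rw [Set.mem_setOf_eq, this]
        exact I.add_mem (I.mul_mem_left s ht) hs } with hS
  have hloc : IsLocalization S (A ⧸ I) := by
    constructor
    constructor
    · rintro ⟨s, hs⟩
      have : (Ideal.Quotient.mk I) s = 1 := by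
        rw [← sub_eq_zero, ← map_one (Ideal.Quotient.mk I), ← map_sub,
          Ideal.Quotient.eq_zero_iff_mem]
        exact hs
      rw [Ideal.Quotient.algebraMap_eq, this]
      exact isUnit_one
    · intro z
      obtain ⟨a, rfl⟩ := Ideal.Quotient.mk_surjective z
      exact ⟨⟨a, 1⟩, by simp⟩
    · intro a b hab
      rw [Ideal.Quotient.algebraMap_eq] at hab
      have : a - b ∈ I := by
        rwa [← Ideal.Quotient.eq_zero_iff_mem, map_sub, sub_eq_zero]
      obtain ⟨c, hc, hcc⟩ := h (a - b) this
      refine ⟨⟨1 - c, ?_⟩, ?_⟩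
      · show (1 - c) - 1 ∈ I
        simpa using I.neg_mem hc
      · have h0 : (a - b) * (1 - c) = 0 := by
          have : (a - b) * (1 - c) = (a - b) - (a - b) * c := by ring
          rw [this, hcc, sub_self]
        show (1 - c) * a = (1 - c) * b
        linear_combination h0
  refine ⟨S, (IsLocalization.algEquiv S (Localization S) (A ⧸ I)).toRingEquiv, ?_⟩
  ext a
  simp only [RingHom.comp_apply] at *
  exact (IsLocalization.algEquiv S (Localization S) (A ⧸ I)).commutes a
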